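/- arXiv:2001.09264 — 3 statements merged into one kernel-verified Lean document; each statement's English description precedes it below -/
import Mathlib

section
/- For every α ≥ 0, Q₁(α, α) = (1/2) · (1 + e^{−α²} I₀(α²)). -/
open MeasureTheory Real Filter Topology

/-- The zeroth-order modified Bessel function of the first kind,
`I₀(x) = ∑_{i=0}^∞ (x/2)^{2i} / (i!)²`. -/
noncomputable def besselI0 (x : ℝ) : ℝ :=
  ∑' i : ℕ, (x / 2) ^ (2 * i) / ((Nat.factorial i : ℝ)) ^ 2

/-- The first-order Marcum Q-function,
`Q₁(α,β) = ∫_β^∞ x e^{−(x²+α²)/2} I₀(αx) dx`. -/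
noncomputable def marcumQ1 (α β : ℝ) : ℝ :=
  ∫ x in Set.Ioi β, x * Real.exp (-((x ^ 2 + α ^ 2) / 2)) * besselI0 (α * x)

/-- Auxiliary polynomial: `-P n x * exp(-x²/2)` is an antiderivative of
`x^(2n+1) * exp(-x²/2)`. -/
noncomputable def marcumP : ℕ → ℝ → ℝ
  | 0, _ => 1
  | (n+1), x => (2*(n:ℝ)+2) * marcumP n x + x^(2*n+2)

lemma hasDerivAt_exp_neg_sq (x : ℝ) :
    HasDerivAt (fun y : ℝ => Real.exp (-(y^2/2))) (-x * Real.exp (-(x^2/2))) x := by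
  have h1 : HasDerivAt (fun y : ℝ => -(y^2/2)) (-x) x := by
    have := ((hasDerivAt_pow 2 x).div_const 2).neg
    refine this.congr_deriv ?_
    push_cast; ring
  have h2 := (Real.hasDerivAt_exp (-(x^2/2))).comp x h1
  refine h2.congr_deriv ?_
  ring

lemma hasDerivAt_marcumP (n : ℕ) (x : ℝ) :
    HasDerivAt (fun y => -marcumP n y * Real.exp (-(y^2/2)))
      (x^(2*n+1) * Real.exp (-(x^2/2))) x := by
  induction n generalizing x with
  | zero =>
    have h := (hasDerivAt_exp_neg_sq x).neg
    have heq : (fun y : ℝ => -marcumP 0 y * Real.exp (-(y^2/2)))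
        = fun y => -(Real.exp (-(y^2/2))) := by
      funext y; simp [marcumP]
    rw [heq]
    refine h.congr_deriv ?_; ring
  | succ n ih =>
    have h1 : HasDerivAt (fun y : ℝ => y^(2*n+2) * Real.exp (-(y^2/2)))
        (((2*n+2 : ℕ) : ℝ) * x^(2*n+1) * Real.exp (-(x^2/2))
          + x^(2*n+2) * (-x * Real.exp (-(x^2/2)))) x := by
      have := (hasDerivAt_pow (2*n+2) x).mul (hasDerivAt_exp_neg_sq x)
      refine this.congr_deriv ?_ <;> push_cast <;> ring
    have h2 := ((ih x).const_mul ((2*(n:ℝ)+2))).add h1.neg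
    have heq : (fun y : ℝ => -marcumP (n+1) y * Real.exp (-(y^2/2)))
        = fun y => (2*(n:ℝ)+2) * (-marcumP n y * Real.exp (-(y^2/2)))
            + -(y^(2*n+2) * Real.exp (-(y^2/2))) := by
      funext y; show -((2*(n:ℝ)+2) * marcumP n y + y^(2*n+2)) * _ = _; ring
    rw [heq]
    refine h2.congr_deriv ?_ <;> push_cast <;> ring

lemma tendsto_sq_div_two : Tendsto (fun x : ℝ => x^2/2) atTop atTop := by
  apply Tendsto.atTop_div_const two_pos
  exact tendsto_pow_atTop two_ne_zero

lemma tendsto_even_pow_mul_exp (k : ℕ) :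
    Tendsto (fun x : ℝ => x^(2*k) * Real.exp (-(x^2/2))) atTop (𝓝 0) := by
  have h := ((tendsto_pow_mul_exp_neg_atTop_nhds_zero k).comp tendsto_sq_div_two).const_mul
    ((2:ℝ)^k)
  rw [mul_zero] at h
  refine h.congr fun x => ?_
  show (2:ℝ)^k * ((x^2/2)^k * Real.exp (-(x^2/2))) = _
  rw [div_pow, ← pow_mul]
  field_simp

lemma tendsto_marcumP (n : ℕ) :
    Tendsto (fun x => -marcumP n x * Real.exp (-(x^2/2))) atTop (𝓝 0) := by
  induction n with
  | zero =>
    have h := (tendsto_even_pow_mul_exp 0).neg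
    rw [neg_zero] at h
    refine h.congr fun x => ?_
    simp [marcumP]
  | succ n ih =>
    have h := (ih.const_mul (2*(n:ℝ)+2)).add (tendsto_even_pow_mul_exp (n+1)).neg
    rw [mul_zero, neg_zero, add_zero] at h
    refine h.congr fun x => ?_
    show (2*(n:ℝ)+2) * (-marcumP n x * _) + -(x^(2*(n+1)) * _)
        = -((2*(n:ℝ)+2) * marcumP n x + x^(2*n+2)) * _
    ring

lemma integrableOn_pow_exp (c : ℝ) (hc : 0 ≤ c) (n : ℕ) :
    IntegrableOn (fun x => x^(2*n+1) * Real.exp (-(x^2/2))) (Set.Ioi c) := by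
  refine integrableOn_Ioi_deriv_of_nonneg' (fun x _ => hasDerivAt_marcumP n x)
    (fun x hx => ?_) (tendsto_marcumP n)
  exact mul_nonneg (pow_nonneg (le_trans hc hx.out.le) _) (Real.exp_pos _).le

lemma integral_pow_exp (c : ℝ) (hc : 0 ≤ c) (n : ℕ) :
    ∫ x in Set.Ioi c, x^(2*n+1) * Real.exp (-(x^2/2))
      = marcumP n c * Real.exp (-(c^2/2)) := by
  have h := integral_Ioi_of_hasDerivAt_of_nonneg' (fun x _ => hasDerivAt_marcumP n x)
    (fun x hx => mul_nonneg (pow_nonneg (le_trans hc hx.out.le) _) (Real.exp_pos _).le)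
    (tendsto_marcumP n)
  rw [h]; ring

lemma marcumP_eq (c : ℝ) (n : ℕ) :
    marcumP n c = 2^n * (Nat.factorial n : ℝ)
      * ∑ k ∈ Finset.range (n+1), (c^2/2)^k / (Nat.factorial k : ℝ) := by
  induction n with
  | zero => simp [marcumP]
  | succ n ih =>
    show (2*(n:ℝ)+2) * marcumP n c + c^(2*n+2) = _
    rw [ih, Finset.sum_range_succ (f := fun k => (c^2/2)^k / (Nat.factorial k : ℝ)) (n := n+1)]
    have hfac : ((Nat.factorial (n+1) : ℝ)) ≠ 0 := Nat.cast_ne_zero.2 (Nat.factorial_ne_zero _)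
    have h2 : (2:ℝ)^(n+1) * ((c^2/2)^(n+1)) = c^(2*n+2) := by
      rw [← mul_pow, show (2:ℝ) * (c^2/2) = c^2 from by ring, ← pow_mul]
      ring
    have h3 : (Nat.factorial (n+1) : ℝ) * ((c^2/2)^(n+1) / (Nat.factorial (n+1) : ℝ))
        = (c^2/2)^(n+1) := by field_simp
    rw [mul_add]
    nth_rewrite 2 [mul_assoc ((2:ℝ)^(n+1)) _ _]
    rw [h3, h2]
    push_cast [Nat.factorial_succ]
    ring

lemma sum_mul_partial (a : ℕ → ℝ) (N : ℕ) :
    ∑ i ∈ Finset.range N, a i * (∑ k ∈ Finset.range (i+1), a k)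
      = ((∑ i ∈ Finset.range N, a i)^2 + ∑ i ∈ Finset.range N, (a i)^2) / 2 := by
  induction N with
  | zero => simp
  | succ N ih =>
    rw [Finset.sum_range_succ (f := fun i => a i * (∑ k ∈ Finset.range (i+1), a k)), ih,
      Finset.sum_range_succ (f := a), Finset.sum_range_succ (f := fun i => (a i)^2)]
    ring

/-- For every `α ≥ 0`, `Q₁(α,α) = (1/2)(1 + e^{−α²} I₀(α²))`. -/
theorem marcumQ1_diag (α : ℝ) (hα : 0 ≤ α) :
    marcumQ1 α α = (1 / 2) * (1 + Real.exp (-α ^ 2) * besselI0 (α ^ 2)) := by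
  have ht : (0:ℝ) ≤ α^2/2 := by positivity
  set t : ℝ := α^2/2 with ht_def
  set a : ℕ → ℝ := fun i => t^i / (Nat.factorial i : ℝ) with ha_def
  set T : ℕ → ℝ := fun i => ∑ k ∈ Finset.range (i+1), a k with hT_def
  have hsa : Summable a := Real.summable_pow_div_factorial t
  have ha0 : ∀ i, 0 ≤ a i := fun i => div_nonneg (pow_nonneg ht _) (Nat.cast_nonneg _)
  have htsum : ∑' i, a i = Real.exp t := by
    rw [Real.exp_eq_exp_ℝ, NormedSpace.exp_eq_tsum_div]
  have hT_le : ∀ i, T i ≤ Real.exp t := by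
    intro i
    rw [← htsum]
    exact Summable.sum_le_tsum (Finset.range (i+1)) (fun k _ => ha0 k) hsa
  have hT0 : ∀ i, 0 ≤ T i := fun i => Finset.sum_nonneg fun k _ => ha0 k
  have hsum2 : Summable (fun i => (a i)^2) := by
    refine Summable.of_nonneg_of_le (fun i => sq_nonneg _) (fun i => ?_) (hsa.mul_left (Real.exp t))
    rw [sq]
    refine mul_le_mul_of_nonneg_right ?_ (ha0 i)
    rw [← htsum]
    exact Summable.le_tsum hsa i fun j _ => ha0 j
  have hsumL : Summable (fun i => a i * T i) := by
    refine Summable.of_nonneg_of_le (fun i => mul_nonneg (ha0 i) (hT0 i)) (fun i => ?_)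
      (hsa.mul_right (Real.exp t))
    exact mul_le_mul_of_nonneg_left (hT_le i) (ha0 i)
  -- series identity
  have hL : ∑' i, a i * T i = ((Real.exp t)^2 + ∑' i, (a i)^2) / 2 := by
    have h1 := hsumL.hasSum.tendsto_sum_nat
    have h2 : Tendsto (fun N => ((∑ i ∈ Finset.range N, a i)^2
        + ∑ i ∈ Finset.range N, (a i)^2) / 2) atTop
        (𝓝 (((Real.exp t)^2 + ∑' i, (a i)^2) / 2)) := by
      refine Tendsto.div_const (Tendsto.add ?_ hsum2.hasSum.tendsto_sum_nat) 2
      have h3 := hsa.hasSum.tendsto_sum_nat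
      rw [htsum] at h3
      exact h3.pow 2
    have h1' : Tendsto (fun N => ((∑ i ∈ Finset.range N, a i)^2
        + ∑ i ∈ Finset.range N, (a i)^2) / 2) atTop (𝓝 (∑' i, a i * T i)) := by
      refine h1.congr fun N => ?_
      exact sum_mul_partial a N
    exact tendsto_nhds_unique h1' h2
  -- the term functions
  set C : ℕ → ℝ := fun i => (α/2)^(2*i) / ((Nat.factorial i : ℝ))^2 * Real.exp (-(α^2/2))
    with hC_def
  set f : ℕ → ℝ → ℝ := fun i x => C i * (x^(2*i+1) * Real.exp (-(x^2/2))) with hf_def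
  have hpoint : ∀ x : ℝ, x * Real.exp (-((x^2+α^2)/2)) * besselI0 (α*x) = ∑' i, f i x := by
    intro x
    rw [besselI0, ← tsum_mul_left]
    refine tsum_congr fun i => ?_
    have hsplit : Real.exp (-((x^2+α^2)/2)) = Real.exp (-(α^2/2)) * Real.exp (-(x^2/2)) := by
      rw [← Real.exp_add]; congr 1; ring
    rw [show α*x/2 = (α/2)*x from by ring, mul_pow, hsplit]
    simp only [hf_def, hC_def]
    ring
  have hint : ∀ i, IntegrableOn (f i) (Set.Ioi α) := by
    intro i
    simp only [hf_def]
    exact (integrableOn_pow_exp α hα i).const_mul (C i)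
  have hCP : ∀ i, C i * (marcumP i α * Real.exp (-(α^2/2))) = a i * T i * Real.exp (-α^2) := by
    intro i
    have hfac : ((Nat.factorial i : ℝ)) ≠ 0 := Nat.cast_ne_zero.2 (Nat.factorial_ne_zero _)
    have hexp2 : Real.exp (-α^2) = Real.exp (-(α^2/2)) * Real.exp (-(α^2/2)) := by
      rw [← Real.exp_add]; congr 1; ring
    have hkey : (α/2)^(2*i) * 2^i = t^i := by
      rw [pow_mul, ← mul_pow]; congr 1; rw [ht_def]; ring
    have hPT : marcumP i α = 2^i * (Nat.factorial i : ℝ) * T i := by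
      rw [marcumP_eq]
    have hkey2 : C i * (2^i * (Nat.factorial i : ℝ)) = a i * Real.exp (-(α^2/2)) := by
      simp only [hC_def, ha_def]
      rw [← hkey]
      field_simp
    rw [hPT, hexp2]
    linear_combination (T i * Real.exp (-(α^2/2))) * hkey2
  have hval : ∀ i, ∫ x in Set.Ioi α, f i x = a i * T i * Real.exp (-α^2) := by
    intro i
    simp only [hf_def]
    rw [MeasureTheory.integral_const_mul, integral_pow_exp α hα i, hCP i]
  have hmeas : ∀ i, AEStronglyMeasurable (f i) (volume.restrict (Set.Ioi α)) := by
    intro i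
    refine Continuous.aestronglyMeasurable ?_
    simp only [hf_def]
    fun_prop
  have hnn : ∀ i, 0 ≤ᵐ[volume.restrict (Set.Ioi α)] f i := by
    intro i
    filter_upwards [ae_restrict_mem measurableSet_Ioi] with x hx
    have hx0 : (0:ℝ) ≤ x := le_trans hα hx.out.le
    simp only [hf_def, hC_def]
    have hC0 : (0:ℝ) ≤ (α/2)^(2*i) / ((Nat.factorial i : ℝ))^2 * Real.exp (-(α^2/2)) :=
      mul_nonneg (div_nonneg (pow_nonneg (by positivity) _) (sq_nonneg _)) (Real.exp_pos _).le
    exact mul_nonneg hC0 (mul_nonneg (pow_nonneg hx0 _) (Real.exp_pos _).le)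
  have hsumL' : Summable (fun i => a i * T i * Real.exp (-α^2)) := hsumL.mul_right _
  have hbound : ∑' i, ∫⁻ x, ‖f i x‖₊ ∂(volume.restrict (Set.Ioi α)) ≠ ⊤ := by
    have heq : ∀ i, ∫⁻ x, ‖f i x‖₊ ∂(volume.restrict (Set.Ioi α))
        = ENNReal.ofReal (a i * T i * Real.exp (-α^2)) := by
      intro i
      have h1 : ∫⁻ x, ‖f i x‖₊ ∂(volume.restrict (Set.Ioi α))
          = ∫⁻ x, ENNReal.ofReal (f i x) ∂(volume.restrict (Set.Ioi α)) :=
        lintegral_congr_ae ((hnn i).mono fun x hx => Real.enorm_eq_ofReal hx)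
      rw [h1, ← ofReal_integral_eq_lintegral_ofReal (hint i) (hnn i), hval i]
    rw [tsum_congr heq, ← ENNReal.ofReal_tsum_of_nonneg
      (fun i => mul_nonneg (mul_nonneg (ha0 i) (hT0 i)) (Real.exp_pos _).le) hsumL']
    exact ENNReal.ofReal_ne_top
  have hI : marcumQ1 α α = ∑' i, (a i * T i * Real.exp (-α^2)) := by
    rw [marcumQ1]
    simp_rw [hpoint]
    rw [integral_tsum hmeas hbound]
    exact tsum_congr hval
  have hD : ∑' i, (a i)^2 = besselI0 (α^2) := by
    rw [besselI0, ← ht_def]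
    refine tsum_congr fun i => ?_
    simp only [ha_def]
    rw [div_pow, ← pow_mul, mul_comm i 2]
  have hexp1 : Real.exp (α^2) * Real.exp (-α^2) = 1 := by
    rw [← Real.exp_add]; simp
  have hexpt : (Real.exp t)^2 = Real.exp (α^2) := by
    rw [sq, ← Real.exp_add, ht_def]; congr 1; ring
  rw [hI, tsum_mul_right, hL, hexpt, hD]
  have h := hexp1
  nlinarith [h]
end

section
/- Fix α > 0, n > 0 and a real m ≥ 0. Let c̆₁ = α − (√(2π)/2)·(1 − 1/√(2πα²)) and c̆₂ = c̆₁ + √(2π), and let ℓ : ℝ → ℝ be the piecewise function with ℓ(x) = 0 for x < c̆₁, ℓ(x) = (1/√(2π))(x − α) + (1/2)(1 − 1/√(2πα²)) for c̆₁ ≤ x ≤ c̆₂, and ℓ(x) = 1 for x > c̆₂. Then for every ρ with 0 ≤ ρ < c̆₂, ∫_ρ^∞ e^{−nx} x^m ℓ(x) dx = Γ(m+1, n c̆₂) n^{−m−1} + (−α/√(2π) + (1/2)(1 − 1/√(2πα²))) · n^{−m−1} · (Γ(m+1, n·max(c̆₁, ρ)) − Γ(m+1, n c̆₂)) + (n^{−m−2}/√(2π))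 · (Γ(m+2, n·max(c̆₁, ρ)) − Γ(m+2, n c̆₂)), where Γ(s, x) = ∫_x^∞ t^{s−1} e^{−t} dt is the upper incomplete gamma function. -/
open MeasureTheory Real

/-- The upper incomplete gamma function `Γ(s,x) = ∫_x^∞ t^{s−1} e^{−t} dt`. -/
noncomputable def gammaInc (s x : ℝ) : ℝ :=
  ∫ t in Set.Ioi x, t ^ (s - 1) * Real.exp (-t)

private lemma key_integrable {n s a : ℝ} (hn : 0 < n) (hs : 0 < s) (ha : 0 ≤ a) :
    MeasureTheory.IntegrableOn (fun x => Real.exp (-(n * x)) * x ^ (s - 1)) (Set.Ioi a) := by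
  have h0 : MeasureTheory.IntegrableOn (fun t => Real.exp (-t) * t ^ (s - 1))
      (Set.Ioi (n * a)) :=
    (Real.GammaIntegral_convergent hs).mono_set (Set.Ioi_subset_Ioi (by positivity))
  have h1 := (MeasureTheory.integrableOn_Ioi_comp_mul_left_iff
      (fun t => Real.exp (-t) * t ^ (s - 1)) a hn).2 h0
  have h2 := h1.const_mul ((n : ℝ) ^ (s - 1))⁻¹
  refine MeasureTheory.IntegrableOn.congr_fun h2 (fun x hx => ?_) measurableSet_Ioi
  have hx0 : 0 ≤ x := le_trans ha (le_of_lt hx)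
  have hne : (n : ℝ) ^ (s - 1) ≠ 0 := by positivity
  rw [Real.mul_rpow hn.le hx0]
  field_simp

private lemma key_eval {n s a : ℝ} (hn : 0 < n) (ha : 0 ≤ a) :
    ∫ x in Set.Ioi a, Real.exp (-(n * x)) * x ^ (s - 1)
      = n ^ (-s) * gammaInc s (n * a) := by
  have h := MeasureTheory.integral_comp_mul_left_Ioi
      (fun t => t ^ (s - 1) * Real.exp (-t)) a hn
  rw [smul_eq_mul] at h
  have h2 : (∫ x in Set.Ioi a, (n * x) ^ (s - 1) * Real.exp (-(n * x)))
      = n ^ (s - 1) * ∫ x in Set.Ioi a, Real.exp (-(n * x)) * x ^ (s - 1) := by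
    rw [← MeasureTheory.integral_const_mul]
    refine MeasureTheory.setIntegral_congr_fun measurableSet_Ioi (fun x hx => ?_)
    rw [Real.mul_rpow hn.le (le_trans ha (le_of_lt hx))]
    ring
  have hne : (n : ℝ) ^ (s - 1) ≠ 0 := by positivity
  have key : n ^ (s - 1) * (∫ x in Set.Ioi a, Real.exp (-(n * x)) * x ^ (s - 1))
      = n⁻¹ * gammaInc s (n * a) := by
    rw [← h2]
    exact h
  have hpow : n ^ (s - 1) * n ^ (-s) = n⁻¹ := by
    rw [← Real.rpow_add hn, ← Real.rpow_neg_one n]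
    congr 1
    ring
  apply mul_left_cancel₀ hne
  rw [key, ← mul_assoc, hpow]

/-- Closed-form evaluation (Lemma 2 of the paper, case `ρ < c̆₂`) of
`∫_ρ^∞ e^{−nx} x^m ℓ(x) dx`, where `ℓ` is the semi-linear approximant of
`1 − Q₁(α,x)` from Corollary 1. -/
theorem integral_semilinear_closed_form (α n m : ℝ) (hα : 0 < α) (hn : 0 < n)
    (hm : 0 ≤ m) :
    let c₁ : ℝ := α - (Real.sqrt (2 * π) / 2) * (1 - 1 / Real.sqrt (2 * π * α ^ 2))
    let c₂ : ℝ := c₁ + Real.sqrt (2 * π)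
    let ℓ : ℝ → ℝ := fun x =>
      if x < c₁ then 0
      else if x ≤ c₂ then
        (1 / Real.sqrt (2 * π)) * (x - α) +
          (1 / 2) * (1 - 1 / Real.sqrt (2 * π * α ^ 2))
      else 1
    ∀ ρ : ℝ, 0 ≤ ρ → ρ < c₂ →
      (∫ x in Set.Ioi ρ, Real.exp (-(n * x)) * x ^ m * ℓ x) =
        gammaInc (m + 1) (n * c₂) * n ^ (-m - 1) +
          (-(α / Real.sqrt (2 * π)) +
              (1 / 2) * (1 - 1 / Real.sqrt (2 * π * α ^ 2))) * n ^ (-m - 1) *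
            (gammaInc (m + 1) (n * max c₁ ρ) - gammaInc (m + 1) (n * c₂)) +
          (n ^ (-m - 2) / Real.sqrt (2 * π)) *
            (gammaInc (m + 2) (n * max c₁ ρ) - gammaInc (m + 2) (n * c₂)) := by
  intro c₁ c₂ ℓ ρ hρ0 hρc₂
  have hπ : 0 < Real.sqrt (2 * π) := Real.sqrt_pos.2 (by positivity)
  set S : ℝ := Real.sqrt (2 * π) with hS
  set D : ℝ := 1 - 1 / Real.sqrt (2 * π * α ^ 2) with hD
  set K : ℝ := -(α / S) + (1 / 2) * D with hK
  set F : ℝ → ℝ := fun x => Real.exp (-(n * x)) * x ^ m with hF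
  set F1 : ℝ → ℝ := fun x => Real.exp (-(n * x)) * x ^ (m + 1) with hF1
  have hc12 : c₁ < c₂ := by
    have : c₂ = c₁ + S := rfl
    linarith
  set b : ℝ := max c₁ ρ with hb
  have hbρ : ρ ≤ b := le_max_right _ _
  have hb0 : 0 ≤ b := le_trans hρ0 hbρ
  have hbc₂ : b < c₂ := max_lt hc12 hρc₂
  have hc₂0 : 0 ≤ c₂ := le_trans hρ0 hρc₂.le
  -- integrability and evaluation facts
  have iF : ∀ a : ℝ, 0 ≤ a → MeasureTheory.IntegrableOn F (Set.Ioi a) := by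
    intro a ha
    have h := key_integrable (n := n) (s := m + 1) (a := a) hn (by linarith) ha
    simpa [hF, add_sub_cancel_right] using h
  have iF1 : ∀ a : ℝ, 0 ≤ a → MeasureTheory.IntegrableOn F1 (Set.Ioi a) := by
    intro a ha
    have h := key_integrable (n := n) (s := m + 2) (a := a) hn (by linarith) ha
    have : m + 2 - 1 = m + 1 := by ring
    rw [this] at h
    exact h
  have eF : ∀ a : ℝ, 0 ≤ a →
      (∫ x in Set.Ioi a, F x) = n ^ (-m - 1) * gammaInc (m + 1) (n * a) := by
    intro a ha
    have h := key_eval (n := n) (s := m + 1) (a := a) hn ha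
    rw [add_sub_cancel_right, show -(m + 1) = -m - 1 by ring] at h
    exact h
  have eF1 : ∀ a : ℝ, 0 ≤ a →
      (∫ x in Set.Ioi a, F1 x) = n ^ (-m - 2) * gammaInc (m + 2) (n * a) := by
    intro a ha
    have h := key_eval (n := n) (s := m + 2) (a := a) hn ha
    rw [show m + 2 - 1 = m + 1 by ring, show -(m + 2) = -m - 2 by ring] at h
    exact h
  -- pointwise description of the integrand on (ρ, ∞)
  have hpt : Set.EqOn (fun x => Real.exp (-(n * x)) * x ^ m * ℓ x)
      (fun x => (Set.Ioi c₂).indicator F x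
        + (K * (Set.Ioc b c₂).indicator F x
        + (1 / S) * (Set.Ioc b c₂).indicator F1 x)) (Set.Ioi ρ) := by
    intro x hx
    simp only [Set.mem_Ioi] at hx
    by_cases hxc₂ : c₂ < x
    · have h1 : ¬ x < c₁ := not_lt.2 (le_of_lt (lt_trans hc12 hxc₂))
      have h2 : ¬ x ≤ c₂ := not_le.2 hxc₂
      have hi1 : x ∈ Set.Ioi c₂ := hxc₂
      have hi2 : x ∉ Set.Ioc b c₂ := fun h => absurd h.2 h2
      simp only [ℓ, h1, h2, if_false, Set.indicator_of_mem hi1,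
        Set.indicator_of_notMem hi2]
      ring
    · push_neg at hxc₂
      by_cases hxb : b < x
      · -- linear region
        have hxc₁ : ¬ x < c₁ := not_lt.2 (le_of_lt (lt_of_le_of_lt (le_max_left _ _) hxb))
        have hi1 : x ∉ Set.Ioi c₂ := fun h => absurd h (not_lt.2 hxc₂)
        have hi2 : x ∈ Set.Ioc b c₂ := ⟨hxb, hxc₂⟩
        have hx0 : (0 : ℝ) < x := lt_of_le_of_lt hb0 hxb
        have hxm : x ^ (m + 1) = x ^ m * x := Real.rpow_add_one hx0.ne' m
        simp only [ℓ, hxc₁, if_false, if_pos hxc₂, Set.indicator_of_notMem hi1,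
          Set.indicator_of_mem hi2, hF, hF1, hxm, hK]
        have : (1 / S) * (x - α) + (1 / 2) * D = (1 / S) * x + K := by
          rw [hK]; field_simp; ring
        rw [this]
        ring
      · -- zero region: x ≤ b, and x > ρ forces b = c₁ and x ≤ c₁
        push_neg at hxb
        have hρc₁ : ρ < c₁ := by
          have : ρ < max c₁ ρ := lt_of_lt_of_le hx hxb
          rcases lt_max_iff.1 this with h | h
          · exact h
          · exact absurd h (lt_irrefl ρ)
        have hbc₁ : b = c₁ := max_eq_left hρc₁.le
        have hxc₁ : x ≤ c₁ := hbc₁ ▸ hxb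
        have hi1 : x ∉ Set.Ioi c₂ := by
          simp only [Set.mem_Ioi, not_lt]
          exact le_trans hxc₁ hc12.le
        have hi2 : x ∉ Set.Ioc b c₂ := fun h => absurd h.1 (not_lt.2 hxb)
        have hℓ : ℓ x = 0 := by
          rcases lt_or_eq_of_le hxc₁ with h | h
          · simp only [ℓ, if_pos h]
          · have hc₁α : c₁ - α = -(S / 2) * D := by
              simp only [c₁, hS, hD]; ring
            have hxc₂' : x ≤ c₂ := le_trans hxc₁ hc12.le
            simp only [ℓ]
            rw [if_neg (not_lt.2 h.ge), if_pos hxc₂', ← hS, ← hD, h, hc₁α]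
            have h5 : S / S = 1 := div_self hπ.ne'
            calc 1 / S * (-(S / 2) * D) + 1 / 2 * D = -(S / S) * (D / 2) + D / 2 := by ring
              _ = 0 := by rw [h5]; ring
        simp only [hℓ, Set.indicator_of_notMem hi1, Set.indicator_of_notMem hi2]
        ring
  -- main computation
  rw [MeasureTheory.setIntegral_congr_fun measurableSet_Ioi hpt]
  have iIF : MeasureTheory.Integrable ((Set.Ioi c₂).indicator F)
      (MeasureTheory.volume.restrict (Set.Ioi ρ)) :=
    (iF ρ hρ0).indicator measurableSet_Ioi
  have iIF2 : MeasureTheory.Integrable ((Set.Ioc b c₂).indicator F)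
      (MeasureTheory.volume.restrict (Set.Ioi ρ)) :=
    (iF ρ hρ0).indicator measurableSet_Ioc
  have iIF3 : MeasureTheory.Integrable ((Set.Ioc b c₂).indicator F1)
      (MeasureTheory.volume.restrict (Set.Ioi ρ)) :=
    (iF1 ρ hρ0).indicator measurableSet_Ioc
  have iIF23 : MeasureTheory.Integrable
      (fun x => K * (Set.Ioc b c₂).indicator F x + (1 / S) * (Set.Ioc b c₂).indicator F1 x)
      (MeasureTheory.volume.restrict (Set.Ioi ρ)) :=
    (iIF2.const_mul K).add (iIF3.const_mul (1 / S))
  have hsub : Set.Ioc b c₂ ⊆ Set.Ioi ρ := fun x hx => lt_of_le_of_lt hbρ hx.1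
  rw [MeasureTheory.integral_add iIF iIF23,
    MeasureTheory.integral_add (iIF2.const_mul K) (iIF3.const_mul (1 / S)),
    MeasureTheory.integral_const_mul, MeasureTheory.integral_const_mul,
    MeasureTheory.setIntegral_indicator measurableSet_Ioi,
    MeasureTheory.setIntegral_indicator measurableSet_Ioc,
    MeasureTheory.setIntegral_indicator measurableSet_Ioc,
    Set.inter_eq_self_of_subset_right (Set.Ioi_subset_Ioi hρc₂.le),
    Set.inter_eq_self_of_subset_right hsub]
  have hsplitF : (∫ x in Set.Ioc b c₂, F x)
      = (∫ x in Set.Ioi b, F x) - ∫ x in Set.Ioi c₂, F x := by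
    have := MeasureTheory.setIntegral_union (Set.Ioc_disjoint_Ioi le_rfl)
      measurableSet_Ioi ((iF b hb0).mono_set Set.Ioc_subset_Ioi_self) (iF c₂ hc₂0)
    rw [Set.Ioc_union_Ioi_eq_Ioi hbc₂.le] at this
    linarith
  have hsplitF1 : (∫ x in Set.Ioc b c₂, F1 x)
      = (∫ x in Set.Ioi b, F1 x) - ∫ x in Set.Ioi c₂, F1 x := by
    have := MeasureTheory.setIntegral_union (Set.Ioc_disjoint_Ioi le_rfl)
      measurableSet_Ioi ((iF1 b hb0).mono_set Set.Ioc_subset_Ioi_self) (iF1 c₂ hc₂0)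
    rw [Set.Ioc_union_Ioi_eq_Ioi hbc₂.le] at this
    linarith
  rw [hsplitF, hsplitF1, eF c₂ hc₂0, eF b hb0, eF1 c₂ hc₂0, eF1 b hb0]
  rw [hK]
  ring
end

section
/- For every m > 0, a > 0, n₁, n₂ ∈ ℝ and x > 0, the function F₂(y) = (1/(a m²)) · e^{−my} · ( (m n₂ − a n₂ − a m n₁) · e^{m(ay+1)/a} · E₁(m(ay+1)/a) − a · (m n₂ y + n₂ + m n₁) · log(ay + 1) − a n₂ ) is differentiable at x with derivative F₂′(x) = (n₂ x + n₁) · e^{−mx} · log(1 + ax). -/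
open MeasureTheory Real

/-- The exponential integral function `E₁(x) = ∫_x^∞ e^{−t}/t dt`. -/
noncomputable def expE1 (x : ℝ) : ℝ := ∫ t in Set.Ioi x, Real.exp (-t) / t

lemma integrableOn_expE1 {c : ℝ} (hc : 0 < c) :
    IntegrableOn (fun t => Real.exp (-t) / t) (Set.Ioi c) := by
  have hg : IntegrableOn (fun t => Real.exp (-1 * t) / c) (Set.Ioi c) :=
    (exp_neg_integrableOn_Ioi c one_pos).div_const c
  refine hg.mono' ?_ ?_
  · exact ((measurable_exp.comp measurable_neg).div measurable_id).aestronglyMeasurable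
  · filter_upwards [ae_restrict_mem measurableSet_Ioi] with t ht
    have htc : c ≤ t := le_of_lt ht
    have ht0 : 0 < t := lt_of_lt_of_le hc htc
    rw [Real.norm_eq_abs, abs_of_nonneg (by positivity)]
    rw [neg_one_mul]
    exact div_le_div_of_nonneg_left (le_of_lt (Real.exp_pos _)) hc htc

lemma hasDerivAt_expE1 {u : ℝ} (hu : 0 < u) :
    HasDerivAt expE1 (-(Real.exp (-u) / u)) u := by
  set c := u / 2 with hcdef
  have hc : 0 < c := by positivity
  have hcu : c < u := by rw [hcdef]; linarith
  have hint := integrableOn_expE1 hc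
  have key : ∀ y ∈ Set.Ioi c, expE1 y = expE1 c - ∫ t in c..y, Real.exp (-t) / t := by
    intro y hy
    have hy' : c ≤ y := le_of_lt hy
    rw [intervalIntegral.integral_of_le hy']
    have hsplit : expE1 c = (∫ t in Set.Ioc c y, Real.exp (-t) / t) + expE1 y := by
      rw [expE1, expE1, show Set.Ioi c = Set.Ioc c y ∪ Set.Ioi y from
        (Set.Ioc_union_Ioi_eq_Ioi hy').symm,
        setIntegral_union (Set.Ioc_disjoint_Ioi le_rfl) measurableSet_Ioi
          (hint.mono_set Set.Ioc_subset_Ioi_self)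
          (hint.mono_set (Set.Ioi_subset_Ioi hy'))]
    linarith
  have hiv : IntervalIntegrable (fun t => Real.exp (-t) / t) volume c u := by
    rw [intervalIntegrable_iff, Set.uIoc_of_le (le_of_lt hcu)]
    exact hint.mono_set Set.Ioc_subset_Ioi_self
  have hmeas : StronglyMeasurableAtFilter (fun t => Real.exp (-t) / t) (nhds u) :=
    ((measurable_exp.comp measurable_neg).div measurable_id).stronglyMeasurable.stronglyMeasurableAtFilter
  have hcont : ContinuousAt (fun t => Real.exp (-t) / t) u :=
    ((Real.continuous_exp.comp continuous_neg).continuousAt).div continuousAt_id (ne_of_gt hu)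
  have hF : HasDerivAt (fun y => expE1 c - ∫ t in c..y, Real.exp (-t) / t)
      (-(Real.exp (-u) / u)) u :=
    (intervalIntegral.integral_hasDerivAt_right hiv hmeas hcont).const_sub _
  exact hF.congr_of_eventuallyEq
    (Filter.eventuallyEq_of_mem (Ioi_mem_nhds hcu) key)

/-- For every `m > 0`, `a > 0`, `n₁ n₂ ∈ ℝ` and `x > 0`, the function `F₂` below
is differentiable at `x` with derivative `(n₂x + n₁) e^{−mx} log(1 + ax)`. -/
theorem hasDerivAt_F2 (m a n₁ n₂ x : ℝ) (hm : 0 < m) (ha : 0 < a) (hx : 0 < x) :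
    HasDerivAt
      (fun y : ℝ => (1 / (a * m ^ 2)) * Real.exp (-(m * y)) *
        ((m * n₂ - a * n₂ - a * m * n₁) * Real.exp (m * (a * y + 1) / a) *
            expE1 (m * (a * y + 1) / a) -
          a * (m * n₂ * y + n₂ + m * n₁) * Real.log (a * y + 1) - a * n₂))
      ((n₂ * x + n₁) * Real.exp (-(m * x)) * Real.log (1 + a * x)) x := by
  have hax : 0 < a * x + 1 := by positivity
  have hu : 0 < m * (a * x + 1) / a := by positivity
  have h1' : HasDerivAt (fun y : ℝ => m * (a * y + 1) / a) m x := by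
    have h1 : HasDerivAt (fun y : ℝ => m * (a * y + 1) / a) (m * (a * 1) / a) x :=
      ((((hasDerivAt_id x).const_mul a).add_const 1).const_mul m).div_const a
    convert h1 using 1
    field_simp
  have hE1 : HasDerivAt (fun y : ℝ => expE1 (m * (a * y + 1) / a))
      (-(Real.exp (-(m * (a * x + 1) / a)) / (m * (a * x + 1) / a)) * m) x :=
    by have := (hasDerivAt_expE1 hu).comp x h1'; exact this
  have hexp1 : HasDerivAt (fun y : ℝ => Real.exp (-(m * y)))
      (Real.exp (-(m * x)) * (-(m * 1))) x :=
    (((hasDerivAt_id x).const_mul m).neg).exp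
  have hexp2 : HasDerivAt (fun y : ℝ => Real.exp (m * (a * y + 1) / a))
      (Real.exp (m * (a * x + 1) / a) * m) x := h1'.exp
  have hlin : HasDerivAt (fun y : ℝ => a * y + 1) (a * 1) x :=
    ((hasDerivAt_id x).const_mul a).add_const 1
  have hlog : HasDerivAt (fun y : ℝ => Real.log (a * y + 1)) (a * 1 / (a * x + 1)) x :=
    hlin.log (ne_of_gt hax)
  have hP : HasDerivAt (fun y : ℝ => m * n₂ * y + n₂ + m * n₁) (m * n₂ * 1) x :=
    (((hasDerivAt_id x).const_mul (m * n₂)).add_const n₂).add_const (m * n₁)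
  have t1 := (hexp2.const_mul (m * n₂ - a * n₂ - a * m * n₁)).mul hE1
  have t2 := (hP.const_mul a).mul hlog
  have inner := (t1.sub t2).sub_const (a * n₂)
  have whole := (hexp1.const_mul (1 / (a * m ^ 2))).mul inner
  convert whole using 1
  · rfl
  · rfl
  · rfl
  simp only [Pi.mul_apply, Pi.sub_apply]
  rw [show Real.exp (-(m * (a * x + 1) / a)) = (Real.exp (m * (a * x + 1) / a))⁻¹ from
    Real.exp_neg _, show (1 : ℝ) + a * x = a * x + 1 by ring]
  have hB : Real.exp (m * (a * x + 1) / a) ≠ 0 := Real.exp_ne_zero _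
  generalize hBe : Real.exp (m * (a * x + 1) / a) = B at hB ⊢
  have hx1 : a * x + 1 ≠ 0 := ne_of_gt hax
  field_simp
  ring
end
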